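/- For all real numbers x and y with -1 ≤ x ≤ 1 and -1 ≤ y ≤ 1, if |x - y| ≤ a for some non-negative real number a, then |arccos x - arccos y| ≤ π · √(a/2). -/

import Mathlib

open Real

lemma aux_key (u v : ℝ) (hu : 0 ≤ u) (hv : v ≤ π) (huv : u ≤ v) :
    2 * Real.sin ((v - u) / 2) ^ 2 ≤ Real.cos u - Real.cos v := by
  have hcc : Real.cos u - Real.cos v = 2 * Real.sin ((u + v) / 2) * Real.sin ((v - u) / 2) := by
    rw [Real.cos_sub_cos]
    have : Real.sin ((u - v) / 2) = -Real.sin ((v - u) / 2) := by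
      rw [← Real.sin_neg]; ring_nf
    rw [this]; ring
  rw [hcc]
  have ht0 : 0 ≤ (v - u) / 2 := by linarith
  have hts : (v - u) / 2 ≤ (u + v) / 2 := by linarith
  have hsum : (u + v) / 2 + (v - u) / 2 ≤ π := by linarith
  have htπ : (v - u) / 2 ≤ π / 2 := by linarith
  have hsin_t : 0 ≤ Real.sin ((v - u) / 2) :=
    Real.sin_nonneg_of_nonneg_of_le_pi ht0 (by linarith [Real.pi_pos])
  have hmono : Real.sin ((v - u) / 2) ≤ Real.sin ((u + v) / 2) := by
    rcases le_total ((u + v) / 2) (π / 2) with h | h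
    · exact Real.sin_le_sin_of_le_of_le_pi_div_two (by linarith [Real.pi_pos]) h hts
    · rw [← Real.sin_pi_sub ((u + v) / 2)]
      exact Real.sin_le_sin_of_le_of_le_pi_div_two (by linarith [Real.pi_pos])
        (by linarith) (by linarith)
  nlinarith [hsin_t, hmono]

theorem arccos_diff_le (a x y : ℝ) (ha : 0 ≤ a)
    (hx : -1 ≤ x) (hx' : x ≤ 1) (hy : -1 ≤ y) (hy' : y ≤ 1)
    (hxy : |x - y| ≤ a) :
    |Real.arccos x - Real.arccos y| ≤ Real.pi * Real.sqrt (a / 2) := by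
  have hπ := Real.pi_pos
  set u := Real.arccos x with hu_def
  set v := Real.arccos y with hv_def
  have hu0 : 0 ≤ u := Real.arccos_nonneg x
  have huπ : u ≤ π := Real.arccos_le_pi x
  have hv0 : 0 ≤ v := Real.arccos_nonneg y
  have hvπ : v ≤ π := Real.arccos_le_pi y
  set d := |u - v| with hd_def
  have hd0 : 0 ≤ d := abs_nonneg _
  have hdπ : d ≤ π := by
    rw [hd_def, abs_sub_le_iff]; constructor <;> linarith
  have key : 2 * Real.sin (d / 2) ^ 2 ≤ a := by
    rcases le_total u v with h | h
    · have := aux_key u v hu0 hvπ h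
      rw [hu_def, hv_def, Real.cos_arccos hx hx', Real.cos_arccos hy hy'] at this
      have hd : d = v - u := by rw [hd_def, abs_sub_comm, abs_of_nonneg (by linarith)]
      rw [hd]
      calc 2 * Real.sin ((v - u) / 2) ^ 2 ≤ x - y := this
        _ ≤ |x - y| := le_abs_self _
        _ ≤ a := hxy
    · have := aux_key v u hv0 huπ h
      rw [hu_def, hv_def, Real.cos_arccos hx hx', Real.cos_arccos hy hy'] at this
      have hd : d = u - v := by rw [hd_def, abs_of_nonneg (by linarith)]
      rw [hd]
      calc 2 * Real.sin ((u - v) / 2) ^ 2 ≤ y - x := this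
        _ ≤ |x - y| := by rw [abs_sub_comm]; exact le_abs_self _
        _ ≤ a := hxy
  have hjordan : d / π ≤ Real.sin (d / 2) := by
    have := Real.mul_le_sin (x := d / 2) (by linarith) (by linarith)
    calc d / π = 2 / π * (d / 2) := by field_simp
      _ ≤ Real.sin (d / 2) := this
  have hsq : (d / π) ^ 2 ≤ a / 2 := by
    have hdp : 0 ≤ d / π := div_nonneg hd0 hπ.le
    nlinarith [hjordan, key, hdp]
  have : d / π ≤ Real.sqrt (a / 2) := by
    have h1 : d / π = Real.sqrt ((d / π) ^ 2) := (Real.sqrt_sq (by positivity)).symm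
    rw [h1]
    exact Real.sqrt_le_sqrt hsq
  calc d ≤ π * (d / π) := by field_simp; exact le_rfl
    _ ≤ π * Real.sqrt (a / 2) := by
      exact mul_le_mul_of_nonneg_left this hπ.le
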